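/- Let S be a set, A an abelian group, f₀ : S → A any map, and Φ : ℤ[S] ⊗ ℤ[S] → A a homomorphism. Then there exists a unique quadratic map f : ⟨S⟩^nil → A from the free nil₂-group on S such that f(s) = f₀(s) for all s ∈ S and f(u+v) = f(u) + f(v) + Φ(û ⊗ v̂) for all u, v ∈ ⟨S⟩^nil, where û denotes the image of u in the abelianization ℤ[S]. -/

import Mathlib

open scoped TensorProduct

/-- The free nilpotent group of class two on a set `S`. -/
abbrev FreeNil2 (S : Type*) : Type _ :=
  FreeGroup S ⧸ (⊤ : Subgroup (FreeGroup S)).lowerCentralSeries 2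

/-- The abelianization of the free nil₂-group on `S` (isomorphic to `ℤ[S]`),
viewed additively. -/
abbrev FreeNil2Ab (S : Type*) : Type _ := Additive (Abelianization (FreeNil2 S))

/-- The class of `u` in the abelianization. -/
def nil2Ab {S : Type*} (u : FreeNil2 S) : FreeNil2Ab S :=
  Additive.ofMul (Abelianization.of u)

section Aux

variable {S : Type*} {A : Type*} [AddCommGroup A]

theorem nil2Ab_mul (u v : FreeNil2 S) : nil2Ab (u * v) = nil2Ab u + nil2Ab v := by
  simp only [nil2Ab, map_mul]; rfl

theorem nil2Ab_one : nil2Ab (1 : FreeNil2 S) = 0 := by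
  simp only [nil2Ab, map_one]; rfl

theorem nil2Ab_inv (u : FreeNil2 S) : nil2Ab u⁻¹ = -nil2Ab u := by
  simp only [nil2Ab, map_inv]; rfl

/-- The central extension of `FreeNil2 S` by `A` given by the 2-cocycle
`(u, v) ↦ Φ (û ⊗ v̂)`. -/
@[ext] structure Nil2Ext (Φ : (FreeNil2Ab S) ⊗[ℤ] (FreeNil2Ab S) →ₗ[ℤ] A) where
  a : A
  g : FreeNil2 S

variable (Φ : (FreeNil2Ab S) ⊗[ℤ] (FreeNil2Ab S) →ₗ[ℤ] A)

noncomputable instance : Mul (Nil2Ext Φ) :=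
  ⟨fun p q => ⟨p.a + q.a + Φ (nil2Ab p.g ⊗ₜ[ℤ] nil2Ab q.g), p.g * q.g⟩⟩

instance : One (Nil2Ext Φ) := ⟨⟨0, 1⟩⟩

noncomputable instance : Inv (Nil2Ext Φ) :=
  ⟨fun p => ⟨-p.a + Φ (nil2Ab p.g ⊗ₜ[ℤ] nil2Ab p.g), p.g⁻¹⟩⟩

@[simp] theorem Nil2Ext.mul_a (p q : Nil2Ext Φ) :
    (p * q).a = p.a + q.a + Φ (nil2Ab p.g ⊗ₜ[ℤ] nil2Ab q.g) := rfl
@[simp] theorem Nil2Ext.mul_g (p q : Nil2Ext Φ) : (p * q).g = p.g * q.g := rfl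
@[simp] theorem Nil2Ext.one_a : (1 : Nil2Ext Φ).a = 0 := rfl
@[simp] theorem Nil2Ext.one_g : (1 : Nil2Ext Φ).g = 1 := rfl
@[simp] theorem Nil2Ext.inv_a (p : Nil2Ext Φ) :
    p⁻¹.a = -p.a + Φ (nil2Ab p.g ⊗ₜ[ℤ] nil2Ab p.g) := rfl
@[simp] theorem Nil2Ext.inv_g (p : Nil2Ext Φ) : p⁻¹.g = p.g⁻¹ := rfl

noncomputable instance : Group (Nil2Ext Φ) where
  mul_assoc p q r := by
    ext
    · simp only [Nil2Ext.mul_a, Nil2Ext.mul_g, nil2Ab_mul, TensorProduct.add_tmul,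
        TensorProduct.tmul_add, map_add]
      abel
    · simp only [Nil2Ext.mul_g, mul_assoc]
  one_mul p := by
    ext
    · simp [nil2Ab_one]
    · simp
  mul_one p := by
    ext
    · simp [nil2Ab_one]
    · simp
  inv_mul_cancel p := by
    ext
    · simp only [Nil2Ext.mul_a, Nil2Ext.inv_a, Nil2Ext.inv_g, nil2Ab_inv,
        TensorProduct.neg_tmul, map_neg, Nil2Ext.one_a]
      abel
    · simp

theorem Nil2Ext.mul_def (p q : Nil2Ext Φ) :
    p * q = ⟨p.a + q.a + Φ (nil2Ab p.g ⊗ₜ[ℤ] nil2Ab q.g), p.g * q.g⟩ := rfl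

/-- Projection to the group component, as a homomorphism. -/
def Nil2Ext.proj : Nil2Ext Φ →* FreeNil2 S where
  toFun := Nil2Ext.g
  map_one' := rfl
  map_mul' _ _ := rfl

end Aux

open scoped commutatorElement

/-- Given a set `S`, an abelian group `A`, a map `f₀ : S → A` and a homomorphism
`Φ : ℤ[S] ⊗ ℤ[S] → A`, there is a unique quadratic map `f : ⟨S⟩ⁿⁱˡ → A` with
`f(s) = f₀(s)` and `f(u+v) = f(u) + f(v) + Φ(û ⊗ v̂)`. -/
theorem freeNil2_quadratic_extension (S : Type*) {A : Type*} [AddCommGroup A]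
    (f₀ : S → A) (Φ : (FreeNil2Ab S) ⊗[ℤ] (FreeNil2Ab S) →ₗ[ℤ] A) :
    ∃! f : FreeNil2 S → A,
      (∀ s : S, f (QuotientGroup.mk (FreeGroup.of s)) = f₀ s) ∧
      (∀ u v : FreeNil2 S, f (u * v) = f u + f v + Φ (nil2Ab u ⊗ₜ[ℤ] nil2Ab v)) := by
  classical
  set N := (⊤ : Subgroup (FreeGroup S)).lowerCentralSeries 2 with hN
  let mk : FreeGroup S →* FreeNil2 S := QuotientGroup.mk' N
  -- the lift to the central extension
  let φ : FreeGroup S →* Nil2Ext Φ :=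
    FreeGroup.lift (fun s => (⟨f₀ s, QuotientGroup.mk (FreeGroup.of s)⟩ : Nil2Ext Φ))
  -- the group component of φ is the natural quotient map
  have hproj : ∀ w : FreeGroup S, (φ w).g = QuotientGroup.mk w := by
    intro w
    have : (Nil2Ext.proj Φ).comp φ = mk := by
      apply FreeGroup.ext_hom
      intro s
      simp [φ, Nil2Ext.proj, mk]
      rfl
    have := congrFun (congrArg (·.toFun) this) w
    exact this
  -- commutators of the free group have trivial abelianization class
  have habzero : ∀ x ∈ (⊤ : Subgroup (FreeGroup S)).lowerCentralSeries 1,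
      nil2Ab (QuotientGroup.mk x : FreeNil2 S) = 0 := by
    intro x hx
    have hx' : x ∈ commutator (FreeGroup S) := by rwa [← Subgroup.top_lowerCentralSeries_one]
    have hker := Abelianization.commutator_subset_ker
      ((Abelianization.of : FreeNil2 S →* Abelianization (FreeNil2 S)).comp mk) hx'
    simp only [MonoidHom.mem_ker, MonoidHom.comp_apply] at hker
    show Additive.ofMul (Abelianization.of ((mk : FreeGroup S →* FreeNil2 S) x)) = 0
    rw [hker]; rfl
  -- commutators of the free group are central in FreeNil2
  have hcent : ∀ x ∈ (⊤ : Subgroup (FreeGroup S)).lowerCentralSeries 1, ∀ y : FreeGroup S,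
      Commute (QuotientGroup.mk x : FreeNil2 S) (QuotientGroup.mk y) := by
    intro x hx y
    rw [← commutatorElement_eq_one_iff_commute]
    have : ⁅x, y⁆ ∈ N := by
      rw [hN, Subgroup.lowerCentralSeries_succ]
      exact Subgroup.commutator_mem_commutator hx (Subgroup.mem_top y)
    calc ⁅(QuotientGroup.mk x : FreeNil2 S), QuotientGroup.mk y⁆
        = mk ⁅x, y⁆ := (map_commutatorElement mk x y).symm
      _ = 1 := (QuotientGroup.eq_one_iff _).mpr this
  -- φ kills N
  have hker : N ≤ φ.ker := by
    have e2 : N = ⁅(⊤ : Subgroup (FreeGroup S)).lowerCentralSeries 1, (⊤ : Subgroup (FreeGroup S))⁆ := by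
      rw [hN, Subgroup.lowerCentralSeries_succ, Subgroup.commutator_def]
    rw [e2, Subgroup.commutator_le]
    intro x hx y _
    rw [MonoidHom.mem_ker, map_commutatorElement, commutatorElement_eq_one_iff_commute]
    show φ x * φ y = φ y * φ x
    rw [Nil2Ext.mul_def, Nil2Ext.mul_def]
    have h0 : nil2Ab (φ x).g = 0 := by rw [hproj]; exact habzero x hx
    congr 1
    · rw [h0]
      simp only [TensorProduct.zero_tmul, TensorProduct.tmul_zero, map_zero]
      abel
    · rw [hproj, hproj]
      exact hcent x hx y
  -- the induced map on FreeNil2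
  let f' : FreeNil2 S →* Nil2Ext Φ := QuotientGroup.lift N φ hker
  have hf'g : ∀ u : FreeNil2 S, (f' u).g = u := by
    intro u
    induction u using QuotientGroup.induction_on with
    | H w => show (φ w).g = _; rw [hproj]
  refine ⟨fun u => (f' u).a, ⟨?_, ?_⟩, ?_⟩
  · intro s
    show (φ (FreeGroup.of s)).a = f₀ s
    simp [φ]
  · intro u v
    show (f' (u * v)).a = _
    rw [map_mul, Nil2Ext.mul_def]
    simp only [hf'g]
  · -- uniqueness
    intro g hg
    obtain ⟨hg1, hg2⟩ := hg
    have hf1 : ∀ s : S, (f' (QuotientGroup.mk (FreeGroup.of s) : FreeNil2 S)).a = f₀ s := by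
      intro s; show (φ (FreeGroup.of s)).a = f₀ s; simp [φ]
    have hf2 : ∀ u v : FreeNil2 S,
        (f' (u * v)).a = (f' u).a + (f' v).a + Φ (nil2Ab u ⊗ₜ[ℤ] nil2Ab v) := by
      intro u v
      rw [map_mul, Nil2Ext.mul_def]
      simp only [hf'g]
    -- general consequences of the quadratic property
    have key : ∀ h : FreeNil2 S → A,
        (∀ u v : FreeNil2 S, h (u * v) = h u + h v + Φ (nil2Ab u ⊗ₜ[ℤ] nil2Ab v)) →
        h 1 = 0 ∧ ∀ u, h u⁻¹ = -h u + Φ (nil2Ab u ⊗ₜ[ℤ] nil2Ab u) := by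
      intro h hh
      have h1 : h 1 = 0 := by
        have e := hh 1 1
        simp only [mul_one, nil2Ab_one, TensorProduct.zero_tmul, map_zero, add_zero] at e
        exact left_eq_add.mp e
      refine ⟨h1, fun u => ?_⟩
      have e := hh u u⁻¹
      rw [mul_inv_cancel, h1, nil2Ab_inv, TensorProduct.tmul_neg, map_neg] at e
      rw [← sub_eq_zero,
        show h u⁻¹ - (-h u + Φ (nil2Ab u ⊗ₜ[ℤ] nil2Ab u))
          = h u + h u⁻¹ + -Φ (nil2Ab u ⊗ₜ[ℤ] nil2Ab u) from by abel]
      exact e.symm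
    obtain ⟨hgone, hginv⟩ := key g hg2
    obtain ⟨hfone, hfinv⟩ := key (fun u => (f' u).a) hf2
    funext u
    induction u using QuotientGroup.induction_on with
    | H w =>
      induction w with
      | C1 =>
        show g (QuotientGroup.mk 1) = (f' (QuotientGroup.mk 1)).a
        rw [show (QuotientGroup.mk (1 : FreeGroup S) : FreeNil2 S) = 1 from rfl, hgone, hfone]
      | of s =>
        show g (QuotientGroup.mk (FreeGroup.of s)) = (f' (QuotientGroup.mk (FreeGroup.of s))).a
        rw [hg1 s, hf1 s]
      | inv_of s ih =>
        show g (QuotientGroup.mk (FreeGroup.of s)⁻¹) = (f' (QuotientGroup.mk (FreeGroup.of s)⁻¹)).a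
        have hq : (QuotientGroup.mk (FreeGroup.of s)⁻¹ : FreeNil2 S)
            = (QuotientGroup.mk (FreeGroup.of s) : FreeNil2 S)⁻¹ := rfl
        rw [hq, hginv, hfinv]
        have ih' : g (QuotientGroup.mk (FreeGroup.of s)) = (f' (QuotientGroup.mk (FreeGroup.of s))).a := ih
        rw [ih']
      | mul x y ihx ihy =>
        show g (QuotientGroup.mk (x * y)) = (f' (QuotientGroup.mk (x * y))).a
        have hq : (QuotientGroup.mk (x * y) : FreeNil2 S)
            = (QuotientGroup.mk x : FreeNil2 S) * QuotientGroup.mk y := rfl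
        rw [hq, hg2, hf2, ihx, ihy]
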